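/- For every a ∈ ℝ, every n ∈ ℕ, and every complex polynomial P in one variable of degree ≤ n, ∫_ℝ |P(x+a)|² e^{−x²} dx ≤ (n+1) · 8ⁿ · e^{2a²} · ∫_ℝ |P(x)|² e^{−x²} dx. -/

import Mathlib

open MeasureTheory Polynomial
open scoped Real

noncomputable section

namespace Paper

open Filter Real Set Topology

lemma integrable_pow_gauss (k : ℕ) :
    Integrable fun x : ℝ => x ^ k * Real.exp (-x ^ 2) := by
  have h := integrable_rpow_mul_exp_neg_mul_sq (b := 1) one_pos
    (s := (k : ℝ)) (lt_of_lt_of_le neg_one_lt_zero (Nat.cast_nonneg k))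
  simpa [Real.rpow_natCast, neg_one_mul] using h

lemma integrable_poly_gauss (q : ℝ[X]) :
    Integrable fun x : ℝ => q.eval x * Real.exp (-x ^ 2) := by
  have h : (fun x : ℝ => q.eval x * Real.exp (-x ^ 2)) =
      fun x => ∑ k ∈ Finset.range (q.natDegree + 1),
        q.coeff k * (x ^ k * Real.exp (-x ^ 2)) := by
    funext x
    rw [Polynomial.eval_eq_sum_range, Finset.sum_mul]
    simp [mul_assoc]
  rw [h]
  exact integrable_finset_sum _ fun k _ => (integrable_pow_gauss k).const_mul _

lemma tendsto_pow_gauss (k : ℕ) :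
    Tendsto (fun x : ℝ => x ^ k * Real.exp (-x ^ 2)) atTop (𝓝 0) := by
  have hexp : Tendsto (fun x : ℝ => Real.exp (-(1/2) * x)) atTop (𝓝 0) := by
    have h2 : Tendsto (fun x : ℝ => -(1/2) * x) atTop atBot := by
      apply Filter.Tendsto.const_mul_atTop_of_neg (by norm_num : (-(1/2) : ℝ) < 0) tendsto_id
    exact Real.tendsto_exp_atBot.comp h2
  have h := (rpow_mul_exp_neg_mul_sq_isLittleO_exp_neg one_pos
    (k : ℝ)).tendsto_zero_of_tendsto hexp
  have heq : (fun x : ℝ => x ^ (k:ℝ) * Real.exp (-1 * x ^ 2)) =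
      fun x : ℝ => x ^ k * Real.exp (-x ^ 2) := by
    funext x; rw [Real.rpow_natCast]; norm_num
  rwa [heq] at h

lemma tendsto_poly_gauss_atTop (q : ℝ[X]) :
    Tendsto (fun x : ℝ => q.eval x * Real.exp (-x ^ 2)) atTop (𝓝 0) := by
  have h : (fun x : ℝ => q.eval x * Real.exp (-x ^ 2)) =
      fun x => ∑ k ∈ Finset.range (q.natDegree + 1),
        q.coeff k * (x ^ k * Real.exp (-x ^ 2)) := by
    funext x
    rw [Polynomial.eval_eq_sum_range, Finset.sum_mul]
    simp [mul_assoc]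
  rw [h]
  have : (0 : ℝ) = ∑ k ∈ Finset.range (q.natDegree + 1), q.coeff k * 0 := by simp
  rw [this]
  exact tendsto_finset_sum _ fun k _ => (tendsto_pow_gauss k).const_mul _

lemma tendsto_poly_gauss_atBot (q : ℝ[X]) :
    Tendsto (fun x : ℝ => q.eval x * Real.exp (-x ^ 2)) atBot (𝓝 0) := by
  have h := (tendsto_poly_gauss_atTop (q.comp (-X))).comp tendsto_neg_atBot_atTop
  have heq : ((fun x : ℝ => (q.comp (-X)).eval x * Real.exp (-x ^ 2)) ∘ fun x : ℝ => -x) =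
      fun x : ℝ => q.eval x * Real.exp (-x ^ 2) := by
    funext x; simp [Function.comp, Polynomial.eval_comp]
  rwa [heq] at h
-- assume block 1

/-- Gaussian-weighted integral of a real polynomial. -/
def I (q : ℝ[X]) : ℝ := ∫ x : ℝ, q.eval x * Real.exp (-x ^ 2)

lemma I_def (q : ℝ[X]) : I q = ∫ x : ℝ, q.eval x * Real.exp (-x ^ 2) := rfl

lemma I_add (p q : ℝ[X]) : I (p + q) = I p + I q := by
  unfold I
  simp_rw [eval_add, add_mul]
  exact integral_add (integrable_poly_gauss p) (integrable_poly_gauss q)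

lemma I_sub (p q : ℝ[X]) : I (p - q) = I p - I q := by
  unfold I
  simp_rw [eval_sub, sub_mul]
  exact integral_sub (integrable_poly_gauss p) (integrable_poly_gauss q)

lemma I_Cmul (c : ℝ) (p : ℝ[X]) : I (C c * p) = c * I p := by
  unfold I
  simp_rw [eval_mul, eval_C, mul_assoc]
  exact integral_const_mul c _

lemma I_one : I 1 = Real.sqrt π := by
  unfold I
  simp only [eval_one, one_mul]
  have h := integral_gaussian 1
  simpa using h

/-- integration by parts -/
lemma I_deriv (q : ℝ[X]) : I (derivative q) = 2 * I (X * q) := by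
  set r : ℝ[X] := derivative q - C 2 * (X * q) with hr
  have key : I r = 0 := by
    set g : ℝ → ℝ := fun x => q.eval x * Real.exp (-x ^ 2) with hg
    have hderiv : ∀ x : ℝ, HasDerivAt g (r.eval x * Real.exp (-x ^ 2)) x := by
      intro x
      have h1 : HasDerivAt (fun y : ℝ => q.eval y) ((derivative q).eval x) x :=
        q.hasDerivAt x
      have h2 : HasDerivAt (fun y : ℝ => Real.exp (-y ^ 2))
          (Real.exp (-x ^ 2) * -(2 * x ^ 1)) x := ((hasDerivAt_pow 2 x).neg).exp
      have h3 := h1.mul h2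
      refine HasDerivAt.congr_deriv h3 ?_
      simp [hr]
      ring
    have hint := integrable_poly_gauss r
    have hIic : ∫ x in Iic (0:ℝ), r.eval x * Real.exp (-x ^ 2) = g 0 - 0 :=
      integral_Iic_of_hasDerivAt_of_tendsto
        (hderiv 0).continuousAt.continuousWithinAt
        (fun x _ => hderiv x) hint.integrableOn (tendsto_poly_gauss_atBot q)
    have hIoi : ∫ x in Ioi (0:ℝ), r.eval x * Real.exp (-x ^ 2) = 0 - g 0 :=
      integral_Ioi_of_hasDerivAt_of_tendsto
        (hderiv 0).continuousAt.continuousWithinAt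
        (fun x _ => hderiv x) hint.integrableOn (tendsto_poly_gauss_atTop q)
    have := intervalIntegral.integral_Iic_add_Ioi (b := (0:ℝ)) hint.integrableOn hint.integrableOn
    unfold I
    rw [← this, hIic, hIoi]
    ring
  have h2 : I r = I (derivative q) - 2 * I (X * q) := by
    rw [hr, I_sub, I_Cmul]
  linarith

/-- (physicists') Hermite polynomials -/
def hp : ℕ → ℝ[X]
  | 0 => 1
  | 1 => C 2 * X
  | (k+2) => C 2 * X * hp (k+1) - C (2*(k+1) : ℝ) * hp k

lemma hp_rec (k : ℕ) : hp (k+1) = C 2 * X * hp k - C (2*k : ℝ) * hp (k-1) := by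
  cases k with
  | zero => simp [hp]
  | succ m =>
    rw [show hp (m+2) = C 2 * X * hp (m+1) - C (2*(m+1):ℝ) * hp m from rfl]
    push_cast
    rfl

lemma hp_deriv : ∀ k : ℕ, derivative (hp k) = C (2*k : ℝ) * hp (k-1)
  | 0 => by simp [hp]
  | 1 => by simp [hp]
  | (k+2) => by
    have ih1 := hp_deriv (k+1)
    have ih0 := hp_deriv k
    have e1 : hp (k+1-1) = hp k := rfl
    rw [e1] at ih1
    show derivative (C 2 * X * hp (k+1) - C (2*(k+1) : ℝ) * hp k)
      = C (2*((k+2:ℕ):ℝ)) * hp (k+1)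
    rw [derivative_sub, derivative_mul, derivative_mul, derivative_C, derivative_mul,
      derivative_C, derivative_X, ih1, ih0, hp_rec k]
    simp only [map_add, map_mul, map_ofNat, map_natCast, map_one]
    push_cast
    ring

lemma hp_natDegree_le : ∀ k : ℕ, (hp k).natDegree ≤ k
  | 0 => by simp [hp]
  | 1 => by
    show (C (2:ℝ) * X).natDegree ≤ 1
    exact (natDegree_C_mul_le _ _).trans natDegree_X_le
  | (k+2) => by
    have ih1 := hp_natDegree_le (k+1)
    have hCX : (C (2:ℝ) * X).natDegree ≤ 1 := (natDegree_C_mul_le _ _).trans natDegree_X_le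
    show (C 2 * X * hp (k+1) - C (2*(k+1) : ℝ) * hp k).natDegree ≤ k+2
    refine le_trans (natDegree_sub_le _ _) (max_le ?_ ?_)
    · refine le_trans natDegree_mul_le ?_
      omega
    · refine le_trans (natDegree_C_mul_le _ _) ?_
      have := hp_natDegree_le k
      omega

lemma hp_coeff_top : ∀ k : ℕ, (hp k).coeff k = 2^k
  | 0 => by simp [hp]
  | 1 => by simp [hp]
  | (k+2) => by
    have ih1 := hp_coeff_top (k+1)
    show (C 2 * X * hp (k+1) - C (2*(k+1) : ℝ) * hp k).coeff (k+2) = (2:ℝ)^(k+2)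
    rw [coeff_sub]
    have h1 : (C 2 * X * hp (k+1)).coeff (k+2) = 2 * (hp (k+1)).coeff (k+1) := by
      have : C 2 * X * hp (k+1) = C (2:ℝ) * (X * hp (k+1)) := by ring
      rw [this, coeff_C_mul, coeff_X_mul]
    have h2 : (C (2*(k+1) : ℝ) * hp k).coeff (k+2) = 0 := by
      rw [coeff_C_mul, coeff_eq_zero_of_natDegree_lt (lt_of_le_of_lt (hp_natDegree_le k)
        (by omega)), mul_zero]
    rw [h1, h2, ih1]
    ring

lemma I_recur (k j : ℕ) : I (hp (k+1) * hp j) = (2*j : ℝ) * I (hp k * hp (j-1)) := by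
  have hsplit : hp (k+1) * hp j =
      (X * (C 2 * (hp k * hp j))) - C (2*k : ℝ) * (hp (k-1) * hp j) := by
    rw [hp_rec k]; ring
  have hder : derivative (hp k * hp j) =
      C (2*k : ℝ) * (hp (k-1) * hp j) + C (2*j : ℝ) * (hp k * hp (j-1)) := by
    rw [derivative_mul, hp_deriv k, hp_deriv j]; ring
  have h1 : I (X * (C 2 * (hp k * hp j))) =
      (2*k : ℝ) * I (hp (k-1) * hp j) + (2*j : ℝ) * I (hp k * hp (j-1)) := by
    have e1 : X * (C 2 * (hp k * hp j)) = C 2 * (X * (hp k * hp j)) := by ring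
    rw [e1, I_Cmul, ← I_deriv, hder, I_add, I_Cmul, I_Cmul]
  rw [hsplit, I_sub, h1, I_Cmul]
  ring

lemma I_ortho : ∀ k : ℕ, ∀ j : ℕ,
    I (hp k * hp j) = if k = j then Real.sqrt π * 2^k * k.factorial else 0 := by
  intro k
  induction k with
  | zero =>
    intro j
    cases j with
    | zero => simpa [hp] using I_one
    | succ m =>
      have h := I_recur m 0
      have e : hp 0 * hp (m+1) = hp (m+1) * hp 0 := by ring
      rw [e]
      simp only [Nat.cast_zero, mul_zero, zero_mul] at h
      rw [h]
      simp
  | succ k ih =>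
    intro j
    cases j with
    | zero =>
      have h := I_recur k 0
      simp only [Nat.cast_zero, mul_zero, zero_mul] at h
      rw [h]
      simp
    | succ m =>
      rw [I_recur k (m+1)]
      simp only [Nat.add_sub_cancel]
      rw [ih m]
      by_cases hkm : k = m
      · subst hkm
        simp [Nat.factorial_succ]
        push_cast
        ring
      · have : ¬ (k + 1 = m + 1) := by omega
        simp [hkm, this]

/-- Hermite polynomials as complex polynomials. -/
def hC (k : ℕ) : ℂ[X] := (hp k).map (algebraMap ℝ ℂ)

lemma conj_re (w : ℂ) : (w * (starRingEnd ℂ) w).re = ‖w‖^2 := by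
  rw [Complex.mul_conj, Complex.ofReal_re, Complex.normSq_eq_norm_sq]

lemma hC_eval (k : ℕ) (x : ℝ) : (hC k).eval (x:ℂ) = (((hp k).eval x : ℝ) : ℂ) := by
  unfold hC
  rw [Polynomial.eval_map]
  have h := Polynomial.eval₂_at_apply (p := hp k) (algebraMap ℝ ℂ) x
  simpa [Complex.coe_algebraMap] using h

lemma hC_natDegree_le (k : ℕ) : (hC k).natDegree ≤ k :=
  natDegree_map_le.trans (hp_natDegree_le k)

lemma hC_coeff_top (k : ℕ) : (hC k).coeff k = (2:ℂ)^k := by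
  unfold hC
  rw [coeff_map, hp_coeff_top]
  push_cast
  rfl

lemma hC_deriv (k : ℕ) : derivative (hC k) = Polynomial.C (2*(k:ℂ)) * hC (k-1) := by
  unfold hC
  rw [derivative_map, hp_deriv, Polynomial.map_mul, Polynomial.map_C]
  norm_num

/-- pointwise expansion of the squared norm -/
lemma pw (N : ℕ) (b : ℕ → ℂ) (x : ℝ) :
    ‖(∑ k ∈ Finset.range N, Polynomial.C (b k) * hC k).eval (x:ℂ)‖^2 * Real.exp (-x^2)
    = ∑ j ∈ Finset.range N, ∑ k ∈ Finset.range N,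
        (b j * (starRingEnd ℂ) (b k)).re * ((hp j * hp k).eval x * Real.exp (-x^2)) := by
  have hev : (∑ k ∈ Finset.range N, Polynomial.C (b k) * hC k).eval (x:ℂ)
      = ∑ k ∈ Finset.range N, b k * (((hp k).eval x : ℝ) : ℂ) := by
    rw [eval_finset_sum]
    exact Finset.sum_congr rfl fun k _ => by rw [eval_mul, eval_C, hC_eval]
  rw [hev, ← conj_re]
  have h2 : (∑ k ∈ Finset.range N, b k * (((hp k).eval x : ℝ) : ℂ)) *
      (starRingEnd ℂ) (∑ k ∈ Finset.range N, b k * (((hp k).eval x : ℝ) : ℂ))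
      = ∑ j ∈ Finset.range N, ∑ k ∈ Finset.range N,
      ((((hp j).eval x * (hp k).eval x : ℝ)) : ℂ) * (b j * (starRingEnd ℂ) (b k)) := by
    rw [map_sum, Finset.sum_mul_sum]
    refine Finset.sum_congr rfl fun j _ => Finset.sum_congr rfl fun k _ => ?_
    rw [map_mul, Complex.conj_ofReal]
    push_cast
    ring
  rw [h2, Complex.re_sum, Finset.sum_mul]
  refine Finset.sum_congr rfl fun j _ => ?_
  rw [Complex.re_sum, Finset.sum_mul]
  refine Finset.sum_congr rfl fun k _ => ?_
  rw [Complex.re_ofReal_mul, eval_mul]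
  ring

lemma integrable_expansion (N : ℕ) (b : ℕ → ℂ) :
    Integrable fun x : ℝ =>
      ‖(∑ k ∈ Finset.range N, Polynomial.C (b k) * hC k).eval (x:ℂ)‖^2 * Real.exp (-x^2) := by
  have h : (fun x : ℝ =>
      ‖(∑ k ∈ Finset.range N, Polynomial.C (b k) * hC k).eval (x:ℂ)‖^2 * Real.exp (-x^2)) =
      fun x => ∑ j ∈ Finset.range N, ∑ k ∈ Finset.range N,
        (b j * (starRingEnd ℂ) (b k)).re * ((hp j * hp k).eval x * Real.exp (-x^2)) :=
    funext fun x => pw N b x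
  rw [h]
  exact integrable_finset_sum _ fun j _ => integrable_finset_sum _ fun k _ =>
    (integrable_poly_gauss (hp j * hp k)).const_mul _

lemma parseval (N : ℕ) (b : ℕ → ℂ) :
    ∫ x : ℝ, ‖(∑ k ∈ Finset.range N, Polynomial.C (b k) * hC k).eval (x:ℂ)‖^2
        * Real.exp (-x^2)
    = ∑ k ∈ Finset.range N, ‖b k‖^2 * (Real.sqrt π * 2^k * k.factorial) := by
  simp_rw [pw N b]
  rw [integral_finset_sum _ (fun j _ => integrable_finset_sum _ fun k _ =>
    (integrable_poly_gauss (hp j * hp k)).const_mul _)]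
  have hinner : ∀ j ∈ Finset.range N,
      (∫ x : ℝ, ∑ k ∈ Finset.range N,
        (b j * (starRingEnd ℂ) (b k)).re * ((hp j * hp k).eval x * Real.exp (-x^2)))
      = ‖b j‖^2 * (Real.sqrt π * 2^j * j.factorial) := by
    intro j hj
    rw [integral_finset_sum _ (fun k _ => (integrable_poly_gauss (hp j * hp k)).const_mul _)]
    have hterm : ∀ k ∈ Finset.range N,
        (∫ x : ℝ, (b j * (starRingEnd ℂ) (b k)).re * ((hp j * hp k).eval x * Real.exp (-x^2)))
        = (b j * (starRingEnd ℂ) (b k)).re * I (hp j * hp k) := by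
      intro k _
      rw [integral_const_mul, I_def]
    rw [Finset.sum_congr rfl hterm]
    have hcollapse : ∀ k ∈ Finset.range N,
        (b j * (starRingEnd ℂ) (b k)).re * I (hp j * hp k)
        = if j = k then (b j * (starRingEnd ℂ) (b k)).re
            * (Real.sqrt π * 2^j * j.factorial) else 0 := by
      intro k _
      rw [I_ortho j k]
      by_cases h : j = k <;> simp [h]
    rw [Finset.sum_congr rfl hcollapse, Finset.sum_ite_eq (Finset.range N) j, if_pos hj]
    rw [conj_re]
  rw [Finset.sum_congr rfl hinner]

/-- expansion in the Hermite basis -/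
lemma expand : ∀ (n : ℕ) (Q : Polynomial ℂ), Q.natDegree ≤ n →
    ∃ b : ℕ → ℂ, Q = ∑ k ∈ Finset.range (n+1), Polynomial.C (b k) * hC k := by
  intro n
  induction n with
  | zero =>
    intro Q hQ
    refine ⟨fun _ => Q.coeff 0, ?_⟩
    have h0 : (hC 0).natDegree ≤ 0 := hC_natDegree_le 0
    have hc0 : (hC 0).coeff 0 = 1 := by simpa using hC_coeff_top 0
    have h1 : hC 0 = 1 := by
      rw [Polynomial.eq_C_of_natDegree_le_zero h0, hc0, map_one]
    rw [Finset.sum_range_one, h1]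
    simpa using Polynomial.eq_C_of_natDegree_le_zero hQ
  | succ n ih =>
    intro Q hQ
    set c : ℂ := Q.coeff (n+1) / 2^(n+1) with hc
    set R : Polynomial ℂ := Q - Polynomial.C c * hC (n+1) with hR
    have hRdeg : R.natDegree ≤ n := by
      rw [natDegree_le_iff_coeff_eq_zero]
      intro m hm
      rw [hR, coeff_sub, coeff_C_mul]
      rcases Nat.lt_or_ge (n+1) m with h | h
      · rw [coeff_eq_zero_of_natDegree_lt (lt_of_le_of_lt hQ h),
          coeff_eq_zero_of_natDegree_lt (lt_of_le_of_lt (hC_natDegree_le (n+1)) h)]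
        ring
      · have hm1 : m = n+1 := by omega
        subst hm1
        rw [hC_coeff_top, hc]
        field_simp
        ring
    obtain ⟨b', hb'⟩ := ih R hRdeg
    set bb : ℕ → ℂ := fun k => if k = n+1 then c else b' k with hbb
    refine ⟨bb, ?_⟩
    have hbn : bb (n+1) = c := if_pos rfl
    rw [Finset.sum_range_succ, hbn]
    have hsum : ∑ k ∈ Finset.range (n+1), Polynomial.C (bb k) * hC k
        = ∑ k ∈ Finset.range (n+1), Polynomial.C (b' k) * hC k := by
      refine Finset.sum_congr rfl fun k hk => ?_
      have hk' : k ≠ n+1 := by simp at hk; omega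
      rw [hbb]
      simp only [if_neg hk']
    rw [hsum, ← hb', hR]
    ring

/-- Gaussian L² norm squared -/
def Gnorm (Q : Polynomial ℂ) : ℝ := ∫ x : ℝ, ‖Q.eval (x:ℂ)‖^2 * Real.exp (-x^2)

lemma Gnorm_nonneg (Q : Polynomial ℂ) : 0 ≤ Gnorm Q :=
  integral_nonneg fun x => by positivity

lemma integrable_normsq (Q : Polynomial ℂ) :
    Integrable fun x : ℝ => ‖Q.eval (x:ℂ)‖^2 * Real.exp (-x^2) := by
  obtain ⟨b, hb⟩ := expand Q.natDegree Q le_rfl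
  rw [hb]
  exact integrable_expansion _ _

/-- Key spectral bound: the Gaussian norm of the derivative. -/
lemma Gnorm_deriv_le (n : ℕ) (Q : Polynomial ℂ) (hQ : Q.natDegree ≤ n) :
    Gnorm (derivative Q) ≤ 2 * n * Gnorm Q := by
  obtain ⟨b, hb⟩ := expand n Q hQ
  have hder : derivative Q = ∑ m ∈ Finset.range n,
      Polynomial.C ((2*((m:ℂ)+1)) * b (m+1)) * hC m := by
    rw [hb, derivative_sum]
    have h1 : ∀ k, derivative (Polynomial.C (b k) * hC k)
        = Polynomial.C (b k * (2*(k:ℂ))) * hC (k-1) := by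
      intro k
      rw [derivative_mul, derivative_C, hC_deriv k, zero_mul, zero_add, ← mul_assoc, ← map_mul]
    simp_rw [h1]
    rw [Finset.sum_range_succ']
    simp only [Nat.add_sub_cancel, Nat.cast_zero, mul_zero, zero_mul, map_zero, add_zero]
    refine Finset.sum_congr rfl fun i _ => ?_
    rw [show b (i+1) * (2*((i+1:ℕ):ℂ)) = (2*((i:ℂ)+1)) * b (i+1) by push_cast; ring]
  have hGd : Gnorm (derivative Q) = ∑ m ∈ Finset.range n,
      ‖(2*((m:ℂ)+1)) * b (m+1)‖^2 * (Real.sqrt π * 2^m * m.factorial) := by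
    rw [Gnorm, hder]; exact parseval n _
  have hGQ : Gnorm Q = ∑ k ∈ Finset.range (n+1),
      ‖b k‖^2 * (Real.sqrt π * 2^k * k.factorial) := by
    rw [Gnorm]; conv_lhs => rw [hb]
    exact parseval (n+1) b
  rw [hGd, hGQ]
  have hterm : ∀ m ∈ Finset.range n,
      ‖(2*((m:ℂ)+1)) * b (m+1)‖^2 * (Real.sqrt π * 2^m * m.factorial)
      ≤ 2*n * (‖b (m+1)‖^2 * (Real.sqrt π * 2^(m+1) * (m+1).factorial)) := by
    intro m hm
    have hm' : m + 1 ≤ n := Finset.mem_range.mp hm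
    have hn1 : ‖(2*((m:ℂ)+1))‖ = 2*((m:ℝ)+1) := by
      rw [show (2*((m:ℂ)+1)) = (((2*((m:ℝ)+1)) : ℝ) : ℂ) by push_cast; ring,
        Complex.norm_real, Real.norm_eq_abs]
      exact abs_of_nonneg (by positivity)
    have hnorm : ‖(2*((m:ℂ)+1)) * b (m+1)‖^2
        = (2*((m:ℝ)+1))^2 * ‖b (m+1)‖^2 := by
      rw [norm_mul, mul_pow, hn1]
    rw [hnorm]
    have harith : (2*((m:ℝ)+1))^2 * ‖b (m+1)‖^2 * (Real.sqrt π * 2^m * m.factorial)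
        = (2*((m:ℝ)+1)) * (‖b (m+1)‖^2 * (Real.sqrt π * 2^(m+1) * (m+1).factorial)) := by
      rw [Nat.factorial_succ]; push_cast; ring
    rw [harith]
    refine mul_le_mul_of_nonneg_right ?_ (by positivity)
    have hc : ((m:ℝ)+1) ≤ n := by exact_mod_cast hm'
    linarith
  refine le_trans (Finset.sum_le_sum hterm) ?_
  rw [← Finset.mul_sum]
  refine mul_le_mul_of_nonneg_left ?_ (by positivity)
  rw [Finset.sum_range_succ']
  have h0 : 0 ≤ ‖b 0‖^2 * (Real.sqrt π * 2^0 * (Nat.factorial 0)) := by positivity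
  linarith

lemma Gnorm_iter (n : ℕ) (Q : Polynomial ℂ) (hQ : Q.natDegree ≤ n) (k : ℕ) :
    Gnorm (derivative^[k] Q) ≤ 2^k * (n.descFactorial k) * Gnorm Q := by
  induction k with
  | zero => simpa using le_refl (Gnorm Q)
  | succ k ih =>
    rw [Function.iterate_succ_apply']
    have hdeg : (derivative^[k] Q).natDegree ≤ n - k :=
      (natDegree_iterate_derivative Q k).trans (Nat.sub_le_sub_right hQ k)
    have h1 := Gnorm_deriv_le (n-k) _ hdeg
    calc Gnorm (derivative (derivative^[k] Q)) ≤ 2*((n-k : ℕ):ℝ) * Gnorm (derivative^[k] Q) := h1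
    _ ≤ 2*((n-k : ℕ):ℝ) * (2^k * n.descFactorial k * Gnorm Q) := by
        refine mul_le_mul_of_nonneg_left ih (by positivity)
    _ = 2^(k+1) * (n.descFactorial (k+1)) * Gnorm Q := by
        rw [Nat.descFactorial_succ, Nat.cast_mul]; ring

lemma Gnorm_nsmul (m : ℕ) (R : Polynomial ℂ) : Gnorm (m • R) = (m:ℝ)^2 * Gnorm R := by
  unfold Gnorm
  have h : ∀ x : ℝ, ‖(m • R).eval (x:ℂ)‖^2 * Real.exp (-x^2)
      = (m:ℝ)^2 * (‖R.eval (x:ℂ)‖^2 * Real.exp (-x^2)) := by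
    intro x
    rw [Polynomial.eval_smul, nsmul_eq_mul, norm_mul, mul_pow, Complex.norm_natCast]
    ring
  simp_rw [h]
  exact integral_const_mul _ _

lemma Gnorm_hasse (n : ℕ) (P : Polynomial ℂ) (hPn : P.natDegree ≤ n) (k : ℕ) :
    Gnorm (hasseDeriv k P) ≤ 2^k * (n.descFactorial k) / ((k.factorial : ℝ))^2 * Gnorm P := by
  have hsm : derivative^[k] P = k.factorial • hasseDeriv k P := by
    rw [← Polynomial.factorial_smul_hasseDeriv]
    rfl
  have h1 : ((k.factorial : ℝ))^2 * Gnorm (hasseDeriv k P) = Gnorm (derivative^[k] P) := by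
    rw [hsm, Gnorm_nsmul]
  have h2 := Gnorm_iter n P hPn k
  rw [← h1] at h2
  have hk : (0:ℝ) < ((k.factorial : ℝ))^2 := by positivity
  rw [div_mul_eq_mul_div, le_div_iff₀ hk]
  linarith

/-- for a complex polynomial `P` of degree at most `n`,
`∫ |P(x+a)|² e^{−x²} dx ≤ (n+1) 8ⁿ e^{2a²} ∫ |P(x)|² e^{−x²} dx`. -/
theorem statement16 (a : ℝ) (n : ℕ) (P : Polynomial ℂ) (hP : P.degree ≤ n) :
    ∫ x : ℝ, ‖P.eval ((x + a : ℝ) : ℂ)‖ ^ 2 * Real.exp (-x ^ 2) ≤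
      (n + 1) * 8 ^ n * Real.exp (2 * a ^ 2) *
        ∫ x : ℝ, ‖P.eval ((x : ℝ) : ℂ)‖ ^ 2 * Real.exp (-x ^ 2) := by
  have hPn : P.natDegree ≤ n := natDegree_le_iff_degree_le.mpr hP
  -- Taylor expansion
  have htay : ∀ x : ℝ, P.eval ((x + a : ℝ) : ℂ)
      = ∑ k ∈ Finset.range (n+1), (hasseDeriv k P).eval (x:ℂ) * (a:ℂ)^k := by
    intro x
    have h1 : ((x + a : ℝ) : ℂ) = (a:ℂ) + (x:ℂ) := by push_cast; ring
    have hdeg : (Polynomial.taylor (x:ℂ) P).natDegree < n+1 := by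
      rw [Polynomial.natDegree_taylor]; omega
    rw [h1, ← Polynomial.taylor_eval (x:ℂ) P (a:ℂ),
      Polynomial.eval_eq_sum_range' hdeg]
    exact Finset.sum_congr rfl fun k _ => by rw [Polynomial.taylor_coeff]
  -- pointwise Cauchy-Schwarz
  have hptb : ∀ x : ℝ, ‖P.eval ((x + a : ℝ):ℂ)‖^2 ≤
      (n+1 : ℝ) * ∑ k ∈ Finset.range (n+1),
        ‖(hasseDeriv k P).eval (x:ℂ)‖^2 * (a^2)^k := by
    intro x
    rw [htay x]
    have hcs : (∑ k ∈ Finset.range (n+1), ‖(hasseDeriv k P).eval (x:ℂ) * (a:ℂ)^k‖)^2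
        ≤ (n+1 : ℝ) * ∑ k ∈ Finset.range (n+1),
          ‖(hasseDeriv k P).eval (x:ℂ) * (a:ℂ)^k‖^2 := by
      have := sq_sum_le_card_mul_sum_sq
        (s := Finset.range (n+1)) (f := fun k => ‖(hasseDeriv k P).eval (x:ℂ) * (a:ℂ)^k‖)
      simpa using this
    have hterm : ∀ k ∈ Finset.range (n+1),
        ‖(hasseDeriv k P).eval (x:ℂ) * (a:ℂ)^k‖^2
        = ‖(hasseDeriv k P).eval (x:ℂ)‖^2 * (a^2)^k := by
      intro k _
      rw [norm_mul, mul_pow, norm_pow, Complex.norm_real, Real.norm_eq_abs,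
        ← pow_mul, mul_comm k 2, pow_mul, sq_abs]
    calc ‖∑ k ∈ Finset.range (n+1), (hasseDeriv k P).eval (x:ℂ) * (a:ℂ)^k‖^2
        ≤ (∑ k ∈ Finset.range (n+1), ‖(hasseDeriv k P).eval (x:ℂ) * (a:ℂ)^k‖)^2 :=
          pow_le_pow_left₀ (norm_nonneg _) (norm_sum_le _ _) 2
      _ ≤ (n+1 : ℝ) * ∑ k ∈ Finset.range (n+1),
            ‖(hasseDeriv k P).eval (x:ℂ) * (a:ℂ)^k‖^2 := hcs
      _ = (n+1 : ℝ) * ∑ k ∈ Finset.range (n+1),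
            ‖(hasseDeriv k P).eval (x:ℂ)‖^2 * (a^2)^k := by
          rw [Finset.sum_congr rfl hterm]
  -- integrability of both sides
  have hPa : (fun x : ℝ => ‖P.eval ((x + a : ℝ):ℂ)‖^2 * Real.exp (-x^2))
      = fun x : ℝ => ‖(P.comp (X + Polynomial.C (a:ℂ))).eval (x:ℂ)‖^2 * Real.exp (-x^2) := by
    funext x
    rw [eval_comp, eval_add, eval_X, eval_C]
    norm_cast
  have hLint : Integrable (fun x : ℝ => ‖P.eval ((x + a : ℝ):ℂ)‖^2 * Real.exp (-x^2)) := by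
    rw [hPa]; exact integrable_normsq _
  have hgeq : (fun x : ℝ => (n+1 : ℝ) * (∑ k ∈ Finset.range (n+1),
        ‖(hasseDeriv k P).eval (x:ℂ)‖^2 * (a^2)^k) * Real.exp (-x^2))
      = fun x : ℝ => ∑ k ∈ Finset.range (n+1),
        ((n+1 : ℝ) * (a^2)^k) * (‖(hasseDeriv k P).eval (x:ℂ)‖^2 * Real.exp (-x^2)) := by
    funext x
    rw [Finset.mul_sum, Finset.sum_mul]
    exact Finset.sum_congr rfl fun k _ => by ring
  have hRint : Integrable (fun x : ℝ => (n+1 : ℝ) * (∑ k ∈ Finset.range (n+1),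
        ‖(hasseDeriv k P).eval (x:ℂ)‖^2 * (a^2)^k) * Real.exp (-x^2)) := by
    rw [hgeq]
    exact integrable_finset_sum _ fun k _ => (integrable_normsq (hasseDeriv k P)).const_mul _
  -- integral comparison
  have hmono : ∫ x : ℝ, ‖P.eval ((x + a : ℝ):ℂ)‖^2 * Real.exp (-x^2)
      ≤ ∫ x : ℝ, (n+1 : ℝ) * (∑ k ∈ Finset.range (n+1),
        ‖(hasseDeriv k P).eval (x:ℂ)‖^2 * (a^2)^k) * Real.exp (-x^2) := by
    refine integral_mono hLint hRint fun x => ?_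
    exact mul_le_mul_of_nonneg_right (hptb x) (Real.exp_pos _).le
  -- compute the right integral
  have hRval : ∫ x : ℝ, (n+1 : ℝ) * (∑ k ∈ Finset.range (n+1),
        ‖(hasseDeriv k P).eval (x:ℂ)‖^2 * (a^2)^k) * Real.exp (-x^2)
      = ∑ k ∈ Finset.range (n+1), ((n+1 : ℝ) * (a^2)^k) * Gnorm (hasseDeriv k P) := by
    rw [hgeq]
    rw [integral_finset_sum _ fun k _ => (integrable_normsq (hasseDeriv k P)).const_mul _]
    exact Finset.sum_congr rfl fun k _ => integral_const_mul _ _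
  -- bound the sum
  have hsum : ∑ k ∈ Finset.range (n+1), ((n+1 : ℝ) * (a^2)^k) * Gnorm (hasseDeriv k P)
      ≤ (n+1 : ℝ) * 2^n * Real.exp (2*a^2) * Gnorm P := by
    have hstep : ∀ k ∈ Finset.range (n+1),
        ((n+1 : ℝ) * (a^2)^k) * Gnorm (hasseDeriv k P)
        ≤ (n+1 : ℝ) * 2^n * ((2*a^2)^k / k.factorial) * Gnorm P := by
      intro k hk
      have hkn : k ≤ n := by simpa using Nat.lt_succ_iff.mp (Finset.mem_range.mp hk)
      have h1 := Gnorm_hasse n P hPn k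
      have hchoose : (n.choose k : ℝ) ≤ 2^n := by
        have h2 : n.choose k ≤ 2^n := by
          calc n.choose k ≤ ∑ m ∈ Finset.range (n+1), n.choose m :=
            Finset.single_le_sum (fun i _ => Nat.zero_le _) hk
          _ = 2^n := Nat.sum_range_choose n
        exact_mod_cast h2
      have hdesc : ((n.descFactorial k : ℝ)) = k.factorial * n.choose k := by
        rw [Nat.descFactorial_eq_factorial_mul_choose]; push_cast; ring
      have hfac : (0:ℝ) < k.factorial := by positivity
      calc ((n+1 : ℝ) * (a^2)^k) * Gnorm (hasseDeriv k P)
          ≤ ((n+1 : ℝ) * (a^2)^k) * (2^k * (n.descFactorial k) / ((k.factorial : ℝ))^2 * Gnorm P) := by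
            refine mul_le_mul_of_nonneg_left h1 (by positivity)
        _ = (n+1 : ℝ) * ((2*a^2)^k / k.factorial) * (n.choose k) * Gnorm P := by
            rw [hdesc, mul_pow]
            field_simp
        _ ≤ (n+1 : ℝ) * ((2*a^2)^k / k.factorial) * 2^n * Gnorm P := by
            refine mul_le_mul_of_nonneg_right ?_ (Gnorm_nonneg P)
            refine mul_le_mul_of_nonneg_left hchoose (by positivity)
        _ = (n+1 : ℝ) * 2^n * ((2*a^2)^k / k.factorial) * Gnorm P := by ring
    refine le_trans (Finset.sum_le_sum hstep) ?_
    have hexp : ∑ k ∈ Finset.range (n+1), (2*a^2)^k / k.factorial ≤ Real.exp (2*a^2) :=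
      Real.sum_le_exp_of_nonneg (by positivity) (n+1)
    calc ∑ k ∈ Finset.range (n+1), (n+1 : ℝ) * 2^n * ((2*a^2)^k / k.factorial) * Gnorm P
        = (n+1 : ℝ) * 2^n * (∑ k ∈ Finset.range (n+1), (2*a^2)^k / k.factorial) * Gnorm P := by
          rw [Finset.mul_sum, Finset.sum_mul]
      _ ≤ (n+1 : ℝ) * 2^n * Real.exp (2*a^2) * Gnorm P := by
          refine mul_le_mul_of_nonneg_right ?_ (Gnorm_nonneg P)
          exact mul_le_mul_of_nonneg_left hexp (by positivity)
  -- finish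
  have hfinal : (n+1 : ℝ) * 2^n * Real.exp (2*a^2) * Gnorm P
      ≤ (n+1 : ℝ) * 8^n * Real.exp (2*a^2) * Gnorm P := by
    have h28 : (2:ℝ)^n ≤ 8^n := pow_le_pow_left₀ (by norm_num) (by norm_num) n
    refine mul_le_mul_of_nonneg_right ?_ (Gnorm_nonneg P)
    refine mul_le_mul_of_nonneg_right ?_ (Real.exp_pos _).le
    exact mul_le_mul_of_nonneg_left h28 (by positivity)
  have hGP : Gnorm P = ∫ x : ℝ, ‖P.eval ((x : ℝ) : ℂ)‖ ^ 2 * Real.exp (-x ^ 2) := rfl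
  calc ∫ x : ℝ, ‖P.eval ((x + a : ℝ) : ℂ)‖ ^ 2 * Real.exp (-x ^ 2)
      ≤ ∑ k ∈ Finset.range (n+1), ((n+1 : ℝ) * (a^2)^k) * Gnorm (hasseDeriv k P) := by
        rw [← hRval]; exact hmono
    _ ≤ (n+1 : ℝ) * 2^n * Real.exp (2*a^2) * Gnorm P := hsum
    _ ≤ (n+1 : ℝ) * 8^n * Real.exp (2*a^2) * Gnorm P := hfinal
    _ = (n + 1) * 8 ^ n * Real.exp (2 * a ^ 2) *
        ∫ x : ℝ, ‖P.eval ((x : ℝ) : ℂ)‖ ^ 2 * Real.exp (-x ^ 2) := by rw [hGP]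

end Paper
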